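/- Let ū be a super-solution and u̲ a sub-solution of (⋆) on (0,∞) such that: 0 ≤ ū, u̲ ≤ s_+ on (0,∞); ū(r) = ᾱ·r^{γ_+} + o(r^{γ_+}) and u̲(r) = α̲·r^{γ_+} + o(r^{γ_+}) as r → 0, with ᾱ > 0; and ū(r) = s_+ − β̄·r^{−2} + o(r^{−2}) and u̲(r) = s_+ − β̲·r^{−2} + o(r^{−2}) as r → ∞, with β̲ > 0. Then there exists θ₀ > 0 such that for every θ ∈ (0, θ₀) and every r ∈ (0,∞), one has ū(r/θ) > u̲(r). -/

import Mathlib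

open Set Filter Topology MeasureTheory
open scoped ENNReal NNReal

/-- `γ₊ = ((1-p) + √((p-1)² + 4q))/2`, the positive root of `γ² + (p-1)γ - q = 0`. -/
noncomputable def gammaPlus (p q : ℝ) : ℝ :=
  ((1 - p) + Real.sqrt ((p - 1) ^ 2 + 4 * q)) / 2

/-- Condition (condF) on the nonlinearity `F` (with `0 < sp` recorded separately). -/
def CondF (F : ℝ → ℝ) (sp : ℝ) : Prop :=
  ContDiff ℝ 1 F ∧ F 0 = 0 ∧ F sp = 0 ∧
    (∀ t ∈ Set.Ioo 0 sp, F t < 0) ∧ (∀ t, sp < t → 0 < F t) ∧ 0 < deriv F sp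

/-- The ODE (⋆) `u'' + (p/r) u' - (q/r²) u = F(u)` holds at the point `r`. -/
def ODEAt (p q : ℝ) (F : ℝ → ℝ) (u : ℝ → ℝ) (r : ℝ) : Prop :=
  deriv (deriv u) r + (p / r) * deriv u r - (q / r ^ 2) * u r = F (u r)

/-- `ψ` is locally Lipschitz on the set `I`. -/
def LocLipOn (I : Set ℝ) (ψ : ℝ → ℝ) : Prop :=
  ∀ x ∈ I, ∃ K : ℝ≥0, ∃ t ∈ nhdsWithin x I, LipschitzOnWith K ψ t

/-- `ψ` is a locally Lipschitz, piecewise `C²` super-solution of (⋆) on `I`: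
outside a locally finite set `S` of jump points it is `C²` and satisfies
`ψ'' + (p/r)ψ' - (q/r²)ψ ≤ F(ψ)`, and at each jump point the one-sided
derivatives exist with `ψ'(r₀⁻) > ψ'(r₀⁺)`. -/
def IsSuperSolutionOn (p q : ℝ) (F : ℝ → ℝ) (I : Set ℝ) (ψ : ℝ → ℝ) : Prop :=
  LocLipOn I ψ ∧
    ∃ S : Set ℝ,
      (∀ x ∈ I, ∃ ε > 0, (S ∩ Set.Ioo (x - ε) (x + ε)).Finite) ∧
      (∀ x ∈ I \ S, ContDiffAt ℝ 2 ψ x ∧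
        deriv (deriv ψ) x + (p / x) * deriv ψ x - (q / x ^ 2) * ψ x ≤ F (ψ x)) ∧
      (∀ x ∈ I ∩ S, ∃ dl dr : ℝ, HasDerivWithinAt ψ dl (Set.Iio x) x ∧
        HasDerivWithinAt ψ dr (Set.Ioi x) x ∧ dr < dl)

/-- `ψ` is a locally Lipschitz, piecewise `C²` sub-solution of (⋆) on `I`. -/
def IsSubSolutionOn (p q : ℝ) (F : ℝ → ℝ) (I : Set ℝ) (ψ : ℝ → ℝ) : Prop :=
  LocLipOn I ψ ∧
    ∃ S : Set ℝ,
      (∀ x ∈ I, ∃ ε > 0, (S ∩ Set.Ioo (x - ε) (x + ε)).Finite) ∧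
      (∀ x ∈ I \ S, ContDiffAt ℝ 2 ψ x ∧
        F (ψ x) ≤ deriv (deriv ψ) x + (p / x) * deriv ψ x - (q / x ^ 2) * ψ x) ∧
      (∀ x ∈ I ∩ S, ∃ dl dr : ℝ, HasDerivWithinAt ψ dl (Set.Iio x) x ∧
        HasDerivWithinAt ψ dr (Set.Ioi x) x ∧ dl < dr)

/-- `u(r) = α·r^γ + o(r^γ)` as `r → 0⁺`. -/
def AsympZero (u : ℝ → ℝ) (α γ : ℝ) : Prop :=
  Filter.Tendsto (fun r : ℝ => (u r - α * r ^ γ) / r ^ γ) (nhdsWithin 0 (Set.Ioi 0)) (nhds 0)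

/-- `u(r) = sp - β·r⁻² + o(r⁻²)` as `r → ∞`. -/
def AsympInfty (u : ℝ → ℝ) (sp β : ℝ) : Prop :=
  Filter.Tendsto (fun r : ℝ => (u r - (sp - β / r ^ 2)) * r ^ 2) Filter.atTop (nhds 0)

-- C2 helper
lemma auxC2 {u : ℝ → ℝ} {x : ℝ} (h : ContDiffAt ℝ 2 u x) :
    DifferentiableAt ℝ u x ∧ DifferentiableAt ℝ (deriv u) x ∧ ContinuousAt (deriv u) x := by
  have hev : ∀ᶠ y in 𝓝 x, ContDiffAt ℝ 2 u y := h.eventually (by norm_num)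
  obtain ⟨U, hU, hUx, hUc⟩ : ∃ U, IsOpen U ∧ x ∈ U ∧ ∀ y ∈ U, ContDiffAt ℝ 2 u y := by
    rcases eventually_nhds_iff.1 hev with ⟨U, h1, h2, h3⟩
    exact ⟨U, h2, h3, h1⟩
  have hCD : ContDiffOn ℝ 2 u U := fun y hy => (hUc y hy).contDiffWithinAt
  have h2 : ContDiffOn ℝ (1 + 1) u U := by norm_num; exact hCD
  rw [contDiffOn_succ_iff_deriv_of_isOpen hU] at h2
  refine ⟨h.differentiableAt (by norm_num), ?_, ?_⟩
  · have := (h2.2.2.differentiableOn one_ne_zero) x hUx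
    exact this.differentiableAt (hU.mem_nhds hUx)
  · exact (h2.2.2.continuousOn.continuousAt (hU.mem_nhds hUx))


-- left derivative at local max is ≥ 0
lemma left_deriv_nonneg_of_isMaxOn {f : ℝ → ℝ} {x d : ℝ}
    (hd : HasDerivWithinAt f d (Iio x) x) (hmax : ∀ᶠ y in 𝓝[<] x, f y ≤ f x) : 0 ≤ d := by
  have h := hasDerivWithinAt_iff_tendsto_slope.1 hd
  have : Iio x \ {x} = Iio x := diff_singleton_eq_self (by simp)
  rw [this] at h
  refine ge_of_tendsto h ?_
  filter_upwards [hmax, self_mem_nhdsWithin] with y hy (hy' : y < x)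
  rw [slope_def_field]
  exact div_nonneg_of_nonpos (by linarith) (by linarith)

lemma right_deriv_nonpos_of_isMaxOn {f : ℝ → ℝ} {x d : ℝ}
    (hd : HasDerivWithinAt f d (Ioi x) x) (hmax : ∀ᶠ y in 𝓝[>] x, f y ≤ f x) : d ≤ 0 := by
  have h := hasDerivWithinAt_iff_tendsto_slope.1 hd
  have : Ioi x \ {x} = Ioi x := diff_singleton_eq_self (by simp)
  rw [this] at h
  refine le_of_tendsto h ?_
  filter_upwards [hmax, self_mem_nhdsWithin] with y hy (hy' : x < y)
  rw [slope_def_field]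
  exact div_nonpos_of_nonpos_of_nonneg (by linarith) (by linarith)


lemma deriv2_nonpos_of_isLocalMax {f : ℝ → ℝ} {x : ℝ}
    (hf : ContDiffAt ℝ 2 f x) (hmax : IsLocalMax f x) : deriv (deriv f) x ≤ 0 := by
  by_contra hpos
  push_neg at hpos
  set g := deriv f with hg
  have hgx : g x = 0 := hmax.deriv_eq_zero
  have hev : ∀ᶠ y in 𝓝 x, ContDiffAt ℝ 2 f y := hf.eventually (by norm_num)
  have hdiff : ∀ᶠ y in 𝓝 x, DifferentiableAt ℝ f y := by
    filter_upwards [hev] with y hy; exact hy.differentiableAt (by norm_num)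
  have hg' : HasDerivAt g (deriv g x) x := by
    obtain ⟨U, hU, hUx, hUc⟩ : ∃ U, IsOpen U ∧ x ∈ U ∧ ∀ y ∈ U, ContDiffAt ℝ 2 f y := by
      rcases eventually_nhds_iff.1 hev with ⟨U, h1, h2, h3⟩; exact ⟨U, h2, h3, h1⟩
    have hCD : ContDiffOn ℝ (1+1) f U := by
      norm_num; exact fun y hy => (hUc y hy).contDiffWithinAt
    rw [contDiffOn_succ_iff_deriv_of_isOpen hU] at hCD
    have := (hCD.2.2.differentiableOn one_ne_zero) x hUx
    exact (this.differentiableAt (hU.mem_nhds hUx)).hasDerivAt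
  have hslope := hasDerivAt_iff_tendsto_slope.1 hg'
  have hposev : ∀ᶠ y in 𝓝[≠] x, 0 < slope g x y :=
    hslope.eventually (eventually_gt_nhds hpos)
  have hneg : ∀ᶠ y in 𝓝[<] x, g y < 0 := by
    have := hposev.filter_mono (nhdsWithin_mono x (fun y (hy : y < x) => ne_of_lt hy))
    filter_upwards [this, self_mem_nhdsWithin] with y hy (hy' : y < x)
    rw [slope_def_field, hgx, sub_zero] at hy
    by_contra hc
    push_neg at hc
    have : g y / (y - x) ≤ 0 := div_nonpos_of_nonneg_of_nonpos hc (by linarith)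
    linarith
  obtain ⟨l, hl, hlneg⟩ := (mem_nhdsLT_iff_exists_Ioo_subset).1 hneg
  obtain ⟨δ1, hδ1, hdiff'⟩ := Metric.eventually_nhds_iff.1 hdiff
  obtain ⟨δ3, hδ3, hmax'⟩ := Metric.eventually_nhds_iff.1 hmax
  set y := max (x - min δ1 δ3 / 2) ((l + x) / 2) with hy
  have hyx : y < x := by
    have h1 : 0 < min δ1 δ3 := lt_min hδ1 hδ3
    have h2 : l < x := hl
    apply max_lt <;> [linarith; linarith]
  have hyl : l < y := lt_of_lt_of_le (by have : (l:ℝ) < x := hl; linarith) (le_max_right _ _)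
  have hydist : x - y < min δ1 δ3 := by
    have h1 : 0 < min δ1 δ3 := lt_min hδ1 hδ3
    have := le_max_left (x - min δ1 δ3 / 2) ((l + x) / 2)
    linarith
  have hsub : Ioo y x ⊆ Ioo l x := fun z hz => ⟨lt_trans hyl hz.1, hz.2⟩
  have hdistz : ∀ z ∈ Icc y x, dist z x < min δ1 δ3 := by
    intro z hz
    rw [Real.dist_eq, abs_lt]
    constructor <;> [linarith [hz.1, hz.2, hydist]; linarith [hz.2, lt_min hδ1 hδ3]]
  have hcont : ContinuousOn f (Icc y x) := by
    intro z hz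
    exact ((hdiff' (lt_of_lt_of_le (hdistz z hz) (min_le_left _ _))).continuousAt).continuousWithinAt
  have hderiv : ∀ z ∈ Ioo y x, HasDerivAt f (g z) z := fun z hz =>
    (hdiff' (lt_of_lt_of_le (hdistz z (Ioo_subset_Icc_self hz)) (min_le_left _ _))).hasDerivAt
  obtain ⟨c, hc, hceq⟩ := exists_hasDerivAt_eq_slope f g hyx hcont hderiv
  have hgc : g c < 0 := hlneg (hsub hc)
  have hfyx : f y ≤ f x := hmax' (lt_of_lt_of_le (hdistz y ⟨le_refl y, le_of_lt hyx⟩) (min_le_right _ _))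
  rw [hceq] at hgc
  have : 0 ≤ (f x - f y) / (x - y) := div_nonneg (by linarith) (by linarith)
  linarith


lemma gronwall_vanish {φ ψ : ℝ → ℝ} {h B M : ℝ} (hh : 0 < h) (hB : 0 ≤ B) (hM : 0 ≤ M)
    (hφ' : ∀ s ∈ Icc 0 h, HasDerivAt φ (ψ s) s)
    (hψ' : ∀ s ∈ Icc 0 h, ∃ d, HasDerivAt ψ d s ∧ d ≤ B * |ψ s| + M * φ s)
    (hφ0 : φ 0 = 0) (hψ0 : ψ 0 = 0)
    (hφpos : ∀ s ∈ Icc 0 h, 0 ≤ φ s) :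
    ∀ s ∈ Icc 0 h, φ s ≤ 0 := by
  classical
  set W : ℝ → ℝ := fun s => φ s + max (ψ s) 0 with hW
  set K : ℝ := 1 + B + M with hK
  set dd : ℝ → ℝ := fun s => if hs : s ∈ Icc 0 h then Classical.choose (hψ' s hs) else 0 with hdd
  have hddP : ∀ s (hs : s ∈ Icc 0 h), HasDerivAt ψ (dd s) s ∧ dd s ≤ B * |ψ s| + M * φ s := by
    intro s hs
    simp only [hdd, dif_pos hs]
    exact Classical.choose_spec (hψ' s hs)
  set D : ℝ → ℝ := fun s => if 0 < ψ s then ψ s + dd s else if ψ s < 0 then ψ s else max (dd s) 0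
    with hD
  have hcontW : ContinuousOn W (Icc 0 h) := by
    intro s hs
    exact (((hφ' s hs).continuousAt.add (((hddP s hs).1).continuousAt.max continuousAt_const))).continuousWithinAt
  have key : ∀ s ∈ Ico 0 h,
      Tendsto (fun z => (z - s)⁻¹ * (W z - W s)) (𝓝[>] s) (𝓝 (D s)) := by
    intro s hs
    have hsIcc : s ∈ Icc 0 h := ⟨hs.1, le_of_lt hs.2⟩
    have hψc : ContinuousAt ψ s := ((hddP s hsIcc).1).continuousAt
    have hslopeφ : Tendsto (slope φ s) (𝓝[>] s) (𝓝 (ψ s)) :=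
      (hasDerivAt_iff_tendsto_slope.1 (hφ' s hsIcc)).mono_left
        (nhdsWithin_mono s (fun z (hz : s < z) => ne_of_gt hz))
    have hslopeψ : Tendsto (slope ψ s) (𝓝[>] s) (𝓝 (dd s)) :=
      (hasDerivAt_iff_tendsto_slope.1 (hddP s hsIcc).1).mono_left
        (nhdsWithin_mono s (fun z (hz : s < z) => ne_of_gt hz))
    have hslope_eq : ∀ z, z ∈ Ioi s → (z - s)⁻¹ * (W z - W s) = slope W s z := by
      intro z hz; rw [slope_def_field, div_eq_inv_mul]
    have hzs_ne : ∀ z, s < z → (z - s) ≠ 0 := fun z hz => sub_ne_zero.2 (ne_of_gt hz)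
    rcases lt_trichotomy (ψ s) 0 with hneg | hzero | hpos
    · -- ψ s < 0 : W = φ near s
      have hev : ∀ᶠ z in 𝓝 s, ψ z < 0 := hψc.eventually (eventually_lt_nhds hneg)
      have hDs : D s = ψ s := by simp [hD, hneg, not_lt.2 (le_of_lt hneg)]
      rw [hDs]
      apply hslopeφ.congr'
      filter_upwards [eventually_nhdsWithin_of_eventually_nhds hev, self_mem_nhdsWithin]
        with z hz (hz' : s < z)
      have e1 : W z = φ z := by simp [hW, max_eq_right hz.le]
      have e2 : W s = φ s := by simp [hW, max_eq_right hneg.le]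
      rw [e1, e2, slope_def_field, div_eq_inv_mul]
    · -- ψ s = 0
      have hDs : D s = max (dd s) 0 := by simp [hD, hzero]
      rw [hDs]
      have h1 : Tendsto (fun z => slope φ s z + max (slope ψ s z) 0) (𝓝[>] s)
          (𝓝 (ψ s + max (dd s) 0)) :=
        hslopeφ.add (hslopeψ.max tendsto_const_nhds)
      rw [hzero, zero_add] at h1
      apply h1.congr'
      filter_upwards [self_mem_nhdsWithin] with z (hz : s < z)
      have hzs : (0:ℝ) < z - s := by linarith
      have e2 : W s = φ s := by simp [hW, hzero]
      have e3 : max (slope ψ s z) 0 = max (ψ z) 0 / (z - s) := by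
        rw [slope_def_field, hzero, sub_zero, ← max_div_div_right hzs.le, zero_div]
      rw [e2, slope_def_field, e3]
      simp only [hW]
      field_simp
      ring
    · -- ψ s > 0 : W = φ + ψ near s
      have hev : ∀ᶠ z in 𝓝 s, 0 < ψ z := hψc.eventually (eventually_gt_nhds hpos)
      have hDs : D s = ψ s + dd s := by simp [hD, hpos]
      rw [hDs]
      apply (hslopeφ.add hslopeψ).congr'
      filter_upwards [eventually_nhdsWithin_of_eventually_nhds hev, self_mem_nhdsWithin]
        with z hz (hz' : s < z)
      have e1 : W z = φ z + ψ z := by simp [hW, max_eq_left hz.le]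
      have e2 : W s = φ s + ψ s := by simp [hW, max_eq_left hpos.le]
      rw [e1, e2, slope_def_field, slope_def_field]
      have hzs : (0:ℝ) < z - s := by linarith
      field_simp
      ring
  have bound : ∀ s ∈ Ico 0 h, D s ≤ K * W s + 0 := by
    intro s hs
    have hsIcc : s ∈ Icc 0 h := ⟨hs.1, le_of_lt hs.2⟩
    have hφ := hφpos s hsIcc
    have hd := (hddP s hsIcc).2
    rw [add_zero]
    rcases lt_trichotomy (ψ s) 0 with hneg | hzero | hpos
    · have hDs : D s = ψ s := by simp [hD, hneg, not_lt.2 (le_of_lt hneg)]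
      have hWs : W s = φ s := by simp [hW, max_eq_right hneg.le]
      rw [hDs, hWs]
      nlinarith
    · have hDs : D s = max (dd s) 0 := by simp [hD, hzero]
      have hWs : W s = φ s := by simp [hW, hzero]
      rw [hDs, hWs]
      rw [hzero, abs_zero, mul_zero, zero_add] at hd
      have : max (dd s) 0 ≤ max (M * φ s) 0 := max_le_max hd le_rfl
      rw [max_eq_left (mul_nonneg hM hφ)] at this
      nlinarith [mul_nonneg hB hφ, mul_nonneg hM hφ]
    · have hDs : D s = ψ s + dd s := by simp [hD, hpos]
      have hWs : W s = φ s + ψ s := by simp [hW, max_eq_left hpos.le]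
      rw [hDs, hWs]
      rw [abs_of_pos hpos] at hd
      nlinarith
  have hW0 : W 0 ≤ 0 := by simp [hW, hφ0, hψ0]
  have main := le_gronwallBound_of_liminf_deriv_right_le hcontW
    (fun x hx r hr => ((key x hx).eventually (eventually_lt_nhds hr)).frequently)
    hW0 bound
  intro s hsIcc
  have := main s hsIcc
  rw [gronwallBound_ε0_δ0] at this
  have hle : φ s ≤ W s := le_add_of_nonneg_right (le_max_right _ _)
  linarith


lemma loclip_continuousAt {ψ : ℝ → ℝ} (h : LocLipOn (Ioi 0) ψ) :
    ∀ x ∈ Ioi (0:ℝ), ContinuousAt ψ x := by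
  intro x hx
  obtain ⟨K, t, ht, hlip⟩ := h x hx
  rw [nhdsWithin_eq_nhds.2 (isOpen_Ioi.mem_nhds hx)] at ht
  exact hlip.continuousOn.continuousAt ht

lemma left_deriv_nonpos_of_isMinOn {f : ℝ → ℝ} {x d : ℝ}
    (hd : HasDerivWithinAt f d (Iio x) x) (hmin : ∀ᶠ y in 𝓝[<] x, f x ≤ f y) : d ≤ 0 := by
  have h := hasDerivWithinAt_iff_tendsto_slope.1 hd
  rw [diff_singleton_eq_self (by simp : x ∉ Iio x)] at h
  refine le_of_tendsto h ?_
  filter_upwards [hmin, self_mem_nhdsWithin] with y hy (hy' : y < x)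
  rw [slope_def_field]
  exact div_nonpos_of_nonneg_of_nonpos (by linarith) (by linarith)

lemma right_deriv_nonneg_of_isMinOn {f : ℝ → ℝ} {x d : ℝ}
    (hd : HasDerivWithinAt f d (Ioi x) x) (hmin : ∀ᶠ y in 𝓝[>] x, f x ≤ f y) : 0 ≤ d := by
  have h := hasDerivWithinAt_iff_tendsto_slope.1 hd
  rw [diff_singleton_eq_self (by simp : x ∉ Ioi x)] at h
  refine ge_of_tendsto h ?_
  filter_upwards [hmin, self_mem_nhdsWithin] with y hy (hy' : x < y)
  rw [slope_def_field]
  exact div_nonneg (by linarith) (by linarith)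

-- bound |F t| ≤ L t on [0, sp]
lemma F_linear_bound {F : ℝ → ℝ} {sp : ℝ} (hsp : 0 < sp) (hF : ContDiff ℝ 1 F) (hF0 : F 0 = 0) :
    ∃ L : ℝ, 0 ≤ L ∧ ∀ t, 0 ≤ t → t ≤ sp → |F t| ≤ L * t := by
  have hder : Continuous (deriv F) := (contDiff_one_iff_deriv.1 hF).2
  obtain ⟨c, hc, hmax⟩ := isCompact_Icc.exists_isMaxOn (nonempty_Icc.2 hsp.le)
    (hder.abs.continuousOn : ContinuousOn (fun t => |deriv F t|) (Icc 0 sp))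
  refine ⟨|deriv F c|, abs_nonneg _, fun t ht0 htsp => ?_⟩
  rcases eq_or_lt_of_le ht0 with rfl | ht0'
  · simp [hF0]
  · have hcont : ContinuousOn F (Icc 0 t) := hF.continuous.continuousOn
    have hdiff : ∀ z ∈ Ioo (0:ℝ) t, HasDerivAt F (deriv F z) z := fun z _ =>
      (hF.differentiable one_ne_zero z).hasDerivAt
    obtain ⟨ξ, hξ, hξeq⟩ := exists_hasDerivAt_eq_slope F (deriv F) ht0' hcont hdiff
    have hξmem : ξ ∈ Icc 0 sp := ⟨hξ.1.le, hξ.2.le.trans htsp⟩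
    have : F t = deriv F ξ * t := by
      rw [hξeq, hF0, sub_zero, sub_zero, div_mul_cancel₀ _ (ne_of_gt ht0')]
    rw [this, abs_mul, abs_of_pos ht0']
    exact mul_le_mul_of_nonneg_right (hmax hξmem) ht0'.le


lemma asympZero_bounds {u : ℝ → ℝ} {α γ : ℝ} (h : AsympZero u α γ) {ε : ℝ} (hε : 0 < ε) :
    ∃ δ > 0, ∀ r, 0 < r → r < δ → (α - ε) * r ^ γ < u r ∧ u r < (α + ε) * r ^ γ := by
  have h1 : ∀ᶠ r in 𝓝[>] (0:ℝ), |(u r - α * r ^ γ) / r ^ γ| < ε := by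
    have := Metric.tendsto_nhds.1 h ε hε
    simp only [Real.dist_eq, sub_zero] at this
    exact this
  rw [eventually_iff, mem_nhdsGT_iff_exists_Ioo_subset] at h1
  obtain ⟨δ, hδ, hsub⟩ := h1
  refine ⟨δ, hδ, fun r hr hrδ => ?_⟩
  have hmem := hsub ⟨hr, hrδ⟩
  have hpow : (0:ℝ) < r ^ γ := Real.rpow_pos_of_pos hr γ
  rw [mem_setOf_eq, abs_lt] at hmem
  have h2 : u r - α * r ^ γ < ε * r ^ γ := by
    have := (div_lt_iff₀ hpow).1 hmem.2; linarith
  have h3 : -ε * r ^ γ < u r - α * r ^ γ := by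
    have := (lt_div_iff₀ hpow).1 hmem.1; linarith
  constructor <;> nlinarith

lemma asympInfty_bounds {u : ℝ → ℝ} {sp β : ℝ} (h : AsympInfty u sp β) {ε : ℝ} (hε : 0 < ε) :
    ∃ R, 1 ≤ R ∧ ∀ r, R ≤ r → sp - (β + ε)/r^2 < u r ∧ u r < sp - (β - ε)/r^2 := by
  have h1 : ∀ᶠ r in atTop, |(u r - (sp - β / r ^ 2)) * r ^ 2| < ε := by
    have := Metric.tendsto_nhds.1 h ε hε
    simp only [Real.dist_eq, sub_zero] at this
    exact this
  obtain ⟨R0, hR0⟩ := eventually_atTop.1 h1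
  refine ⟨max R0 1, le_max_right _ _, fun r hr => ?_⟩
  have hr1 : (1:ℝ) ≤ r := le_trans (le_max_right _ _) hr
  have hrpos : (0:ℝ) < r ^ 2 := by positivity
  have hmem := hR0 r (le_trans (le_max_left _ _) hr)
  rw [abs_lt] at hmem
  have h2 : u r - (sp - β / r ^ 2) < ε / r ^ 2 := (lt_div_iff₀ hrpos).2 hmem.2
  have h3 : -ε / r^2 < u r - (sp - β / r ^ 2) := (div_lt_iff₀ hrpos).2 (by linarith [hmem.1])
  constructor
  · rw [add_div]; have := neg_div (r^2) ε; linarith [h3]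
  · rw [sub_div]; linarith [h2]


lemma gammaPlus_pos {p q : ℝ} (hq : 0 < q) : 0 < gammaPlus p q := by
  have h1 : Real.sqrt ((p - 1) ^ 2) < Real.sqrt ((p - 1) ^ 2 + 4 * q) :=
    Real.sqrt_lt_sqrt (by positivity) (by linarith)
  rw [Real.sqrt_sq_eq_abs] at h1
  have h2 := le_abs_self (p - 1)
  unfold gammaPlus
  linarith


lemma ub_pos {p q sp : ℝ} (hp : 0 ≤ p) (hq : 0 < q) (hsp : 0 < sp)
    {F : ℝ → ℝ} (hF1 : ContDiff ℝ 1 F) (hF0 : F 0 = 0)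
    {ub : ℝ → ℝ} {γ αb : ℝ} (hαb : 0 < αb)
    (hsuper : IsSuperSolutionOn p q F (Set.Ioi 0) ub)
    (hubnd : ∀ r ∈ Set.Ioi (0:ℝ), 0 ≤ ub r ∧ ub r ≤ sp)
    (h0ub : AsympZero ub αb γ) :
    ∀ r ∈ Set.Ioi (0:ℝ), 0 < ub r := by
  intro r0 hr0
  rw [mem_Ioi] at hr0
  by_contra hc
  push_neg at hc
  have hub0 : ub r0 = 0 := le_antisymm hc (hubnd r0 hr0).1
  obtain ⟨δ1, hδ1, hδbnd⟩ := asympZero_bounds h0ub (half_pos hαb)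
  have hposδ : ∀ r, 0 < r → r < δ1 → 0 < ub r := by
    intro r h1 h2
    have := (hδbnd r h1 h2).1
    nlinarith [Real.rpow_pos_of_pos h1 γ]
  have hδr0 : δ1 ≤ r0 := by
    by_contra hlt
    push_neg at hlt
    exact absurd (hposδ r0 hr0 hlt) (not_lt.2 hc)
  set δ := δ1 / 2 with hδ
  have hδpos : 0 < δ := by positivity
  set Z := {r : ℝ | r ∈ Icc δ r0 ∧ ub r = 0} with hZ
  have hZne : r0 ∈ Z := ⟨⟨by linarith, le_refl _⟩, hub0⟩
  have hcontub : ContinuousOn ub (Icc δ r0) := fun x hx =>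
    (loclip_continuousAt hsuper.1 x (lt_of_lt_of_le hδpos hx.1)).continuousWithinAt
  have hZclosed : IsClosed Z := by
    have : Z = Icc δ r0 ∩ ub ⁻¹' {0} := by
      ext x; simp [hZ, mem_setOf_eq, and_comm]
    rw [this]
    exact hcontub.preimage_isClosed_of_isClosed isClosed_Icc isClosed_singleton
  have hZbdd : BddBelow Z := ⟨δ, fun z hz => hz.1.1⟩
  set rs := sInf Z with hrs
  have hrsZ : rs ∈ Z := hZclosed.csInf_mem ⟨r0, hZne⟩ hZbdd
  have hrspos : 0 < rs := lt_of_lt_of_le hδpos hrsZ.1.1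
  have hubrs : ub rs = 0 := hrsZ.2
  have hleft : ∀ r, 0 < r → r < rs → 0 < ub r := by
    intro r h1 h2
    by_cases h3 : r < δ1
    · exact hposδ r h1 h3
    · push_neg at h3
      rcases ((hubnd r h1).1).eq_or_lt with heq | hgt
      · exfalso
        have hrZ : r ∈ Z := ⟨⟨by linarith, by linarith [hrsZ.1.2]⟩, by linarith [heq]⟩
        exact absurd (csInf_le hZbdd hrZ) (not_le.2 h2)
      · exact hgt
  obtain ⟨hlip, S, hSfin, hreg, hjump⟩ := hsuper
  have hmin : ∀ᶠ y in 𝓝 rs, ub rs ≤ ub y := by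
    filter_upwards [isOpen_Ioi.mem_nhds (show rs ∈ Ioi 0 from hrspos)] with y hy
    rw [hubrs]; exact (hubnd y hy).1
  by_cases hS : rs ∈ S
  · obtain ⟨dl, dr, hdl, hdr, hjlt⟩ := hjump rs ⟨hrspos, hS⟩
    have h1 : dl ≤ 0 := left_deriv_nonpos_of_isMinOn hdl (hmin.filter_mono nhdsWithin_le_nhds)
    have h2 : 0 ≤ dr := right_deriv_nonneg_of_isMinOn hdr (hmin.filter_mono nhdsWithin_le_nhds)
    linarith
  · obtain ⟨ε, hε, hfin⟩ := hSfin rs hrspos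
    set T := S ∩ Ioo (rs - ε) rs with hT
    have hTfin : T.Finite := hfin.subset (fun x hx => ⟨hx.1, hx.2.1, lt_trans hx.2.2 (by linarith)⟩)
    have hhyp : ∃ h : ℝ, 0 < h ∧ h < rs ∧ ∀ x ∈ Ico (rs - h) rs, x ∉ S := by
      by_cases hTne : T.Nonempty
      · obtain ⟨m, hmT, hmax⟩ := Set.Finite.exists_maximalFor id T hTfin hTne
        have hmlt : m < rs := hmT.2.2
        refine ⟨min (ε / 2) (min (rs / 2) ((rs - m) / 2)), lt_min (by positivity) (lt_min (by positivity) (by linarith)), ?_, ?_⟩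
        · calc min (ε/2) (min (rs/2) ((rs - m)/2)) ≤ rs / 2 :=
                le_trans (min_le_right _ _) (min_le_left _ _)
            _ < rs := by linarith
        · intro x hx hxS
          have hh1 : min (ε/2) (min (rs/2) ((rs - m)/2)) ≤ ε / 2 := min_le_left _ _
          have hh2 : min (ε/2) (min (rs/2) ((rs - m)/2)) ≤ (rs - m) / 2 :=
            le_trans (min_le_right _ _) (min_le_right _ _)
          have hxT : x ∈ T := ⟨hxS, by constructor <;> [linarith [hx.1, hε]; exact hx.2]⟩
          have hmx : m < x := by linarith [hx.1]
          have := hmax hxT (le_of_lt hmx)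
          simp only [id] at this
          exact absurd this (not_le.2 hmx)
      · refine ⟨min (ε / 2) (rs / 2), by positivity, ?_, ?_⟩
        · calc min (ε/2) (rs/2) ≤ rs / 2 := min_le_right _ _
            _ < rs := by linarith
        · intro x hx hxS
          apply hTne
          refine ⟨x, hxS, ?_, hx.2⟩
          have : min (ε/2) (rs/2) ≤ ε/2 := min_le_left _ _
          linarith [hx.1]
    obtain ⟨h, hhpos, hhrs, hnoS⟩ := hhyp
    set a := rs - h with ha
    have hapos : 0 < a := by simp only [ha]; linarith
    obtain ⟨L, hL, hFbnd⟩ := F_linear_bound hsp hF1 hF0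
    set B := p / a with hB'
    set M := q / a ^ 2 + L with hM'
    have hB : 0 ≤ B := div_nonneg hp hapos.le
    have hM : 0 ≤ M := by positivity
    have hx_mem : ∀ s ∈ Icc (0:ℝ) h, 0 < rs - s ∧ rs - s ∉ S := by
      intro s hs
      refine ⟨by linarith [hs.2], ?_⟩
      rcases eq_or_lt_of_le hs.1 with heq | hlt
      · rw [← heq, sub_zero]; exact hS
      · exact hnoS _ ⟨by simp only [ha] at *; linarith [hs.2], by linarith⟩
    have hC2x : ∀ s ∈ Icc (0:ℝ) h, ContDiffAt ℝ 2 ub (rs - s) := fun s hs =>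
      (hreg _ ⟨(hx_mem s hs).1, (hx_mem s hs).2⟩).1
    set φ : ℝ → ℝ := fun s => ub (rs - s) with hφdef
    set ψ : ℝ → ℝ := fun s => -deriv ub (rs - s) with hψdef
    have hin : ∀ s : ℝ, HasDerivAt (fun t : ℝ => rs - t) (-1) s := fun s => by
      simpa using (hasDerivAt_id s).const_sub rs
    have hφ' : ∀ s ∈ Icc (0:ℝ) h, HasDerivAt φ (ψ s) s := by
      intro s hs
      have hdiff := (auxC2 (hC2x s hs)).1
      have hcomp := HasDerivAt.comp s hdiff.hasDerivAt (hin s)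
      have : deriv ub (rs - s) * (-1) = ψ s := by simp [hψdef]
      rw [this] at hcomp
      exact hcomp
    have hψ' : ∀ s ∈ Icc (0:ℝ) h, ∃ d, HasDerivAt ψ d s ∧ d ≤ B * |ψ s| + M * φ s := by
      intro s hs
      have h2 := (auxC2 (hC2x s hs)).2.1
      have hcomp := HasDerivAt.comp s h2.hasDerivAt (hin s)
      have hψd : HasDerivAt ψ (deriv (deriv ub) (rs - s)) s := by
        have := hcomp.neg
        simp only [mul_neg, mul_one, neg_neg] at this
        exact this
      refine ⟨_, hψd, ?_⟩
      have hxpos := (hx_mem s hs).1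
      have hineq := (hreg _ ⟨hxpos, (hx_mem s hs).2⟩).2
      have hφs0 : 0 ≤ φ s := (hubnd _ hxpos).1
      have hφssp : φ s ≤ sp := (hubnd _ hxpos).2
      have hFb := hFbnd (ub (rs - s)) hφs0 hφssp
      have hax : a ≤ rs - s := by simp only [ha]; linarith [hs.2]
      have hFup : F (ub (rs - s)) ≤ L * φ s := le_trans (le_abs_self _) hFb
      have hd1 : p / (rs - s) * ψ s ≤ B * |ψ s| := by
        have h1 : p / (rs - s) ≤ B := by rw [hB']; gcongr
        have h2 : p / (rs - s) * ψ s ≤ p / (rs - s) * |ψ s| :=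
          mul_le_mul_of_nonneg_left (le_abs_self _) (div_nonneg hp hxpos.le)
        exact le_trans h2 (mul_le_mul_of_nonneg_right h1 (abs_nonneg _))
      have hd2 : q / (rs - s) ^ 2 * ub (rs - s) ≤ q / a ^ 2 * φ s := by
        have h1 : q / (rs - s) ^ 2 ≤ q / a ^ 2 := by gcongr
        exact mul_le_mul_of_nonneg_right h1 hφs0
      have hder : deriv ub (rs - s) = -ψ s := by simp [hψdef]
      rw [hder] at hineq
      have : p / (rs - s) * -ψ s = -(p / (rs - s) * ψ s) := by ring
      rw [this] at hineq
      -- hineq : deriv (deriv ub) (rs-s) + -(p/(rs-s) * ψ s) - q/(rs-s)^2 * ub (rs-s) ≤ F (ub (rs-s))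
      have hφub : ub (rs - s) = φ s := rfl
      rw [hM']
      nlinarith [hd1, hd2, hFup, hineq]
    have hφ0 : φ 0 = 0 := by simp [hφdef, hubrs]
    have hψ0 : ψ 0 = 0 := by
      have hlm : IsLocalMin ub rs := hmin
      have : deriv ub rs = 0 := hlm.deriv_eq_zero
      simp [hψdef, this]
    have hφpos : ∀ s ∈ Icc (0:ℝ) h, 0 ≤ φ s := fun s hs => (hubnd _ (hx_mem s hs).1).1
    have hfinal := gronwall_vanish hhpos hB hM hφ' hψ' hφ0 hψ0 hφpos h ⟨hhpos.le, le_refl h⟩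
    have hub_a := hleft a hapos (by simp only [ha]; linarith)
    have : φ h = ub a := rfl
    linarith [hfinal, hub_a, this ▸ hfinal]

lemma lb_lt_sp {p q sp : ℝ} (hp : 0 ≤ p) (hq : 0 < q) (hsp : 0 < sp)
    {F : ℝ → ℝ} (hFsp : F sp = 0)
    {lb : ℝ → ℝ} (hsub : IsSubSolutionOn p q F (Set.Ioi 0) lb)
    (hlbnd : ∀ r ∈ Set.Ioi (0:ℝ), 0 ≤ lb r ∧ lb r ≤ sp) :
    ∀ r ∈ Set.Ioi (0:ℝ), lb r < sp := by
  intro r0 hr0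
  rw [mem_Ioi] at hr0
  rcases ((hlbnd r0 hr0).2).lt_or_eq with hlt | heq
  · exact hlt
  exfalso
  have hmax : IsLocalMax lb r0 := by
    filter_upwards [isOpen_Ioi.mem_nhds (show r0 ∈ Ioi 0 from hr0)] with y hy
    rw [heq]; exact (hlbnd y hy).2
  obtain ⟨hlip, S, hSfin, hreg, hjump⟩ := hsub
  by_cases hS : r0 ∈ S
  · obtain ⟨dl, dr, hdl, hdr, hjlt⟩ := hjump r0 ⟨hr0, hS⟩
    have h1 : 0 ≤ dl := left_deriv_nonneg_of_isMaxOn hdl (hmax.filter_mono nhdsWithin_le_nhds)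
    have h2 : dr ≤ 0 := right_deriv_nonpos_of_isMaxOn hdr (hmax.filter_mono nhdsWithin_le_nhds)
    linarith
  · obtain ⟨hC2, hineq⟩ := hreg r0 ⟨hr0, hS⟩
    have hd0 : deriv lb r0 = 0 := hmax.deriv_eq_zero
    have hd2 : deriv (deriv lb) r0 ≤ 0 := deriv2_nonpos_of_isLocalMax hC2 hmax
    rw [heq, hFsp, hd0, mul_zero, add_zero] at hineq
    have hqr : 0 < q / r0 ^ 2 * sp := by positivity
    linarith


lemma div_sq_helper {c s R : ℝ} (hc : 0 ≤ c) (hs : 0 < s)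
    (h : Real.sqrt (c / s) < R) : c / R ^ 2 < s := by
  have h0 := Real.sqrt_nonneg (c / s)
  have hR : 0 < R := lt_of_le_of_lt h0 h
  have h2 : c / s < R ^ 2 := by
    nlinarith [Real.sq_sqrt (div_nonneg hc hs.le)]
  rw [div_lt_iff₀ (by positivity : (0:ℝ) < R ^ 2)]
  rw [div_lt_iff₀ hs] at h2
  nlinarith
lemma sq_lt_of_lt_sqrt {θ x : ℝ} (hθ : 0 ≤ θ) (hx : 0 ≤ x) (h : θ < Real.sqrt x) : θ ^ 2 < x := by
  nlinarith [Real.sq_sqrt hx, Real.sqrt_nonneg x]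

set_option maxHeartbeats 1000000 in
/-- for all sufficiently small `θ > 0`, `ū(·/θ) > u̲` on `(0,∞)`. -/
theorem stmt2 (p q sp : ℝ) (hp : 0 ≤ p) (hq : 0 < q) (hsp : 0 < sp)
    (F : ℝ → ℝ) (hF : CondF F sp)
    (ub lb : ℝ → ℝ) (αb αl βb βl : ℝ)
    (hsuper : IsSuperSolutionOn p q F (Set.Ioi 0) ub)
    (hsub : IsSubSolutionOn p q F (Set.Ioi 0) lb)
    (hubnd : ∀ r ∈ Set.Ioi (0:ℝ), 0 ≤ ub r ∧ ub r ≤ sp)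
    (hlbnd : ∀ r ∈ Set.Ioi (0:ℝ), 0 ≤ lb r ∧ lb r ≤ sp)
    (hαb : 0 < αb)
    (h0ub : AsympZero ub αb (gammaPlus p q))
    (h0lb : AsympZero lb αl (gammaPlus p q))
    (hβl : 0 < βl)
    (hiub : AsympInfty ub sp βb)
    (hilb : AsympInfty lb sp βl) :
    ∃ θ₀ > 0, ∀ θ : ℝ, 0 < θ → θ < θ₀ → ∀ r : ℝ, 0 < r → lb r < ub (r / θ) := by
  obtain ⟨hF1, hF0, hFsp, hFneg, hFpos, hFd⟩ := hF
  set γ := gammaPlus p q with hγdef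
  have hγ : 0 < γ := gammaPlus_pos hq
  have hubpos : ∀ r ∈ Ioi (0:ℝ), 0 < ub r := ub_pos hp hq hsp hF1 hF0 hαb hsuper hubnd h0ub
  have hlbsp : ∀ r ∈ Ioi (0:ℝ), lb r < sp := lb_lt_sp hp hq hsp hFsp hsub hlbnd
  have hcontub : ∀ x ∈ Ioi (0:ℝ), ContinuousAt ub x := loclip_continuousAt hsuper.1
  have hcontlb : ∀ x ∈ Ioi (0:ℝ), ContinuousAt lb x := loclip_continuousAt hsub.1
  obtain ⟨δ1', hδ1', hδub⟩ := asympZero_bounds h0ub (half_pos hαb)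
  set δ1 := min δ1' 1 with hδ1def
  have hδ1 : 0 < δ1 := lt_min hδ1' one_pos
  have hδ1le1 : δ1 ≤ 1 := min_le_right _ _
  have hδ1le' : δ1 ≤ δ1' := min_le_left _ _
  set C := |αl| + 1 with hCdef
  have hC : 0 < C := by positivity
  obtain ⟨δ2', hδ2', hδlb⟩ := asympZero_bounds h0lb one_pos
  have hlbC : ∀ r, 0 < r → r < δ2' → lb r < C * r ^ γ := by
    intro r h1 h2
    have h3 := (hδlb r h1 h2).2
    have hpow : (0:ℝ) < r ^ γ := Real.rpow_pos_of_pos h1 γ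
    have hle : αl + 1 ≤ C := by
      have h4 := le_abs_self αl; rw [hCdef]; linarith only [h4]
    nlinarith only [h3, hpow, hle]
  set δ2 := min δ2' ((sp / (2 * C)) ^ (1/γ)) with hδ2def
  have hδ2 : 0 < δ2 := lt_min hδ2' (Real.rpow_pos_of_pos (by positivity) _)
  have hδ2le : δ2 ≤ δ2' := min_le_left _ _
  have hrpow_inv : ∀ x : ℝ, 0 < x → (x ^ (1/γ)) ^ γ = x := by
    intro x hx
    rw [← Real.rpow_mul hx.le, one_div, inv_mul_cancel₀ (ne_of_gt hγ), Real.rpow_one]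
  have hCδ2 : C * δ2 ^ γ ≤ sp / 2 := by
    have h1 : δ2 ^ γ ≤ ((sp / (2 * C)) ^ (1/γ)) ^ γ :=
      Real.rpow_le_rpow hδ2.le (min_le_right _ _) hγ.le
    rw [hrpow_inv _ (by positivity)] at h1
    calc C * δ2 ^ γ ≤ C * (sp / (2 * C)) := mul_le_mul_of_nonneg_left h1 hC.le
      _ = sp / 2 := by field_simp
  obtain ⟨r2, hr2one, hr2lb⟩ := asympInfty_bounds hilb (half_pos hβl)
  obtain ⟨R2, hR2one, hR2ub⟩ := asympInfty_bounds hiub one_pos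
  set d := min (δ2 / 2) r2 with hddef
  have hd : 0 < d := lt_min (by positivity) (by linarith only [hr2one])
  have hdr2 : d ≤ r2 := min_le_right _ _
  obtain ⟨cmax, hcmem, hcmax⟩ := isCompact_Icc.exists_isMaxOn (nonempty_Icc.2 hdr2)
    (fun x hx => (hcontlb x (lt_of_lt_of_le hd hx.1)).continuousWithinAt)
  set m := max (sp / 2) (lb cmax) with hmdef
  have hmsp : m < sp := max_lt (by linarith only [hsp]) (hlbsp cmax (lt_of_lt_of_le hd hcmem.1))
  have hm0 : 0 < m := lt_of_lt_of_le (by linarith only [hsp]) (le_max_left _ _)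
  have hm_bound : ∀ r, 0 < r → r ≤ r2 → lb r ≤ m := by
    intro r h1 h2
    by_cases h3 : r ≤ d
    · have hd2 : d ≤ δ2 / 2 := min_le_left _ _
      have h4 : r < δ2' := by linarith only [h3, hd2, hδ2, hδ2le]
      have h5 := hlbC r h1 h4
      have h6 : C * r ^ γ ≤ C * δ2 ^ γ := by
        have h7 := Real.rpow_le_rpow h1.le (by linarith only [h3, hd2, hδ2] : r ≤ δ2) hγ.le
        nlinarith only [h7, hC]
      exact le_trans (le_of_lt h5) (le_trans (le_trans h6 hCδ2) (le_max_left _ _))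
    · push_neg at h3
      exact le_trans (hcmax ⟨h3.le, h2⟩) (le_max_right _ _)
  set R0 := max (max R2 1) (Real.sqrt ((|βb| + 1) / (sp - m)) + 1) with hR0def
  have hR0R2 : R2 ≤ R0 := le_trans (le_max_left _ _) (le_max_left _ _)
  have hR01 : 1 ≤ R0 := le_trans (le_max_right _ _) (le_max_left _ _)
  have hR0pos : 0 < R0 := by linarith only [hR01]
  have hR0m : ∀ R, R0 ≤ R → m < ub R := by
    intro R hR
    have hRpos : (0:ℝ) < R := by linarith only [hR, hR01]
    have h1 := (hR2ub R (le_trans hR0R2 hR)).1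
    have h2 : βb + 1 ≤ |βb| + 1 := by linarith only [le_abs_self βb]
    have hR2pos : (0:ℝ) < R ^ 2 := by positivity
    have h3 : (βb + 1) / R ^ 2 ≤ (|βb| + 1) / R ^ 2 := by gcongr
    have hσ : Real.sqrt ((|βb| + 1) / (sp - m)) < R0 := by
      rw [hR0def]
      have h4 := le_max_right (max R2 1) (Real.sqrt ((|βb| + 1) / (sp - m)) + 1)
      linarith only [h4]
    have hσR : Real.sqrt ((|βb| + 1) / (sp - m)) < R := lt_of_lt_of_le hσ hR
    have h6 : (|βb| + 1) / R ^ 2 < sp - m :=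
      div_sq_helper (by positivity) (by linarith only [hmsp]) hσR
    linarith only [h1, h3, h6]
  have hδ1R0 : δ1 ≤ R0 := le_trans hδ1le1 hR01
  obtain ⟨cmin, hcminmem, hcmin⟩ := isCompact_Icc.exists_isMinOn (nonempty_Icc.2 hδ1R0)
    (fun x hx => (hcontub x (lt_of_lt_of_le hδ1 hx.1)).continuousWithinAt)
  set μ := ub cmin with hμdef
  have hμ : 0 < μ := hubpos cmin (lt_of_lt_of_le hδ1 hcminmem.1)
  set t1 := (αb / (2 * C)) ^ (1/γ) with ht1def
  set t3 := (μ / (C * R0 ^ γ)) ^ (1/γ) with ht3def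
  set t4 := δ2 / (2 * R0) with ht4def
  set t5 := r2 / R0 with ht5def
  set t6 := Real.sqrt (βl / (2 * (|βb| + 1))) with ht6def
  have hR0γ : (0:ℝ) < R0 ^ γ := Real.rpow_pos_of_pos hR0pos γ
  have ht1 : 0 < t1 := Real.rpow_pos_of_pos (by positivity) _
  have ht3 : 0 < t3 := Real.rpow_pos_of_pos (by positivity) _
  have ht4 : 0 < t4 := by positivity
  have ht5 : 0 < t5 := by positivity
  have ht6 : 0 < t6 := Real.sqrt_pos.2 (by positivity)
  clear_value γ δ1 C δ2 d m R0 μ t1 t3 t4 t5 t6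
  refine ⟨min (min t1 t3) (min t4 (min t5 t6)),
    lt_min (lt_min ht1 ht3) (lt_min ht4 (lt_min ht5 ht6)), ?_⟩
  intro θ hθ hθ0 r hr
  have hθt1 : θ < t1 := lt_of_lt_of_le hθ0 (le_trans (min_le_left _ _) (min_le_left _ _))
  have hθt3 : θ < t3 := lt_of_lt_of_le hθ0 (le_trans (min_le_left _ _) (min_le_right _ _))
  have hθt4 : θ < t4 := lt_of_lt_of_le hθ0 (le_trans (min_le_right _ _) (min_le_left _ _))
  have hθt5 : θ < t5 := lt_of_lt_of_le hθ0
    (le_trans (min_le_right _ _) (le_trans (min_le_right _ _) (min_le_left _ _)))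
  have hθt6 : θ < t6 := lt_of_lt_of_le hθ0
    (le_trans (min_le_right _ _) (le_trans (min_le_right _ _) (min_le_right _ _)))
  have hR : 0 < r / θ := div_pos hr hθ
  have hθR0δ2 : θ * R0 < δ2 := by
    rw [ht4def, lt_div_iff₀ (by positivity : (0:ℝ) < 2 * R0)] at hθt4
    nlinarith only [hθt4, mul_pos hθ hR0pos]
  by_cases hcase1 : r < θ * δ1
  · -- region near zero
    have hRδ1 : r / θ < δ1 := by rw [div_lt_iff₀ hθ]; linarith only [hcase1]
    have hub := (hδub (r/θ) hR (lt_of_lt_of_le hRδ1 hδ1le')).1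
    have hrδ2' : r < δ2' := by
      have h1 : θ * δ1 ≤ θ * R0 := by nlinarith only [hδ1R0, hθ.le]
      linarith only [h1, hcase1, hθR0δ2, hδ2le]
    have hlb := hlbC r hr hrδ2'
    have hsplit : (r / θ) ^ γ = r ^ γ / θ ^ γ := Real.div_rpow hr.le hθ.le γ
    have hθγ : θ ^ γ < αb / (2 * C) := by
      rw [ht1def] at hθt1
      have h1 := Real.rpow_lt_rpow hθ.le hθt1 hγ
      rwa [hrpow_inv _ (by positivity)] at h1
    have hθγpos : (0:ℝ) < θ ^ γ := Real.rpow_pos_of_pos hθ γ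
    have hRγpos : (0:ℝ) < (r/θ) ^ γ := Real.rpow_pos_of_pos hR γ
    have hkey : C * r ^ γ < (αb - αb / 2) * (r / θ) ^ γ := by
      have hrγ : r ^ γ = (r/θ) ^ γ * θ ^ γ := by
        rw [hsplit, div_mul_cancel₀ _ (ne_of_gt hθγpos)]
      rw [hrγ]
      have h2 : C * θ ^ γ < αb / 2 := by
        rw [lt_div_iff₀ (by positivity : (0:ℝ) < 2 * C)] at hθγ
        nlinarith only [hθγ, hC]
      nlinarith only [h2, hRγpos]
    linarith only [hlb, hkey, hub]
  push_neg at hcase1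
  by_cases hcase2 : r ≤ θ * R0
  · -- middle compact region
    have hRmem : r / θ ∈ Icc δ1 R0 := by
      constructor
      · rw [le_div_iff₀ hθ]; linarith only [hcase1]
      · rw [div_le_iff₀ hθ]; linarith only [hcase2]
    have hub : μ ≤ ub (r / θ) := by rw [hμdef]; exact hcmin hRmem
    have hrδ2' : r < δ2' := by linarith only [hθR0δ2, hδ2le, hcase2]
    have hlb := hlbC r hr hrδ2'
    have h1 : r ^ γ ≤ (θ * R0) ^ γ := Real.rpow_le_rpow hr.le hcase2 hγ.le
    have h2 : (θ * R0) ^ γ < μ / C := by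
      have h3 : (θ * R0) ^ γ < (t3 * R0) ^ γ := by
        apply Real.rpow_lt_rpow (mul_pos hθ hR0pos).le _ hγ
        nlinarith only [hθt3, hR0pos]
      have h4 : (t3 * R0) ^ γ = (μ / (C * R0 ^ γ)) * R0 ^ γ := by
        rw [Real.mul_rpow ht3.le hR0pos.le, ht3def, hrpow_inv _ (by positivity)]
      rw [h4] at h3
      calc (θ * R0) ^ γ < μ / (C * R0 ^ γ) * R0 ^ γ := h3
        _ = μ / C := by field_simp
    have h5 : C * r ^ γ < μ := by
      calc C * r ^ γ ≤ C * (θ * R0) ^ γ := by nlinarith only [h1, hC]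
        _ < C * (μ / C) := by nlinarith only [h2, hC]
        _ = μ := by field_simp
    linarith only [h5, hlb, hub]
  push_neg at hcase2
  by_cases hcase3 : r ≤ r2
  · have hRge : R0 ≤ r / θ := by rw [le_div_iff₀ hθ]; linarith only [hcase2]
    have hub := hR0m (r/θ) hRge
    have hlb := hm_bound r hr hcase3
    linarith only [hub, hlb]
  · push_neg at hcase3
    have hr2pos : (0:ℝ) < r2 := by linarith only [hr2one]
    have hRR2 : R2 ≤ r / θ := by
      rw [le_div_iff₀ hθ]
      rw [ht5def, lt_div_iff₀ hR0pos] at hθt5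
      nlinarith only [hθt5, hR0R2, hθ.le, hcase3]
    have hub := (hR2ub (r/θ) hRR2).1
    have hlb := (hr2lb r hcase3.le).2
    have hβsimp : βl - βl / 2 = βl / 2 := by ring
    rw [hβsimp] at hlb
    have hrsq : (0:ℝ) < r ^ 2 := by positivity
    have hRsq : (r / θ) ^ 2 = r ^ 2 / θ ^ 2 := by rw [div_pow]
    rw [ht6def] at hθt6
    have hθsq : θ ^ 2 < βl / (2 * (|βb| + 1)) :=
      sq_lt_of_lt_sqrt hθ.le (by positivity) hθt6
    have hb1 : (0:ℝ) < |βb| + 1 := by positivity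
    have hθsq' : θ ^ 2 * (2 * (|βb| + 1)) < βl := by
      rw [lt_div_iff₀ (by positivity : (0:ℝ) < 2 * (|βb| + 1))] at hθsq
      linarith only [hθsq]
    have hnum : (βb + 1) * θ ^ 2 < βl / 2 := by
      have h2 : βb + 1 ≤ |βb| + 1 := by linarith only [le_abs_self βb]
      nlinarith only [hθsq', h2, sq_nonneg θ]
    have hmid : (βb + 1) / (r / θ) ^ 2 < βl / 2 / r ^ 2 := by
      have heq : (βb + 1) / (r / θ) ^ 2 = (βb + 1) * θ ^ 2 / r ^ 2 := by
        rw [hRsq, div_div_eq_mul_div]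
      rw [heq]
      exact (div_lt_div_iff_of_pos_right hrsq).2 hnum
    linarith only [hlb, hub, hmid]
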